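/- (QFT Parseval) For f ∈ L²(ℝ²; ℍ) with suitable integrability, ‖f‖ = (1/(2π))·‖f̂‖, where ‖f‖² = ∫_{ℝ²} |f(x,y)|² dx dy and f̂ is the two-sided quaternion Fourier transform. -/

import Mathlib

open Quaternion MeasureTheory Real

noncomputable def qi : ℍ[ℝ] := ⟨0,1,0,0⟩
noncomputable def qj : ℍ[ℝ] := ⟨0,0,1,0⟩
noncomputable def qk : ℍ[ℝ] := ⟨0,0,0,1⟩
/-- exp(θ·v) = cos θ + v sin θ for a quaternion unit v with v² = -1. -/
noncomputable def qexp (v : ℍ[ℝ]) (θ : ℝ) : ℍ[ℝ] := (Real.cos θ : ℍ[ℝ]) + Real.sin θ • v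

/-- The two-sided quaternion Fourier transform. -/
noncomputable def QFT (f : ℝ × ℝ → ℍ[ℝ]) (u v : ℝ) : ℍ[ℝ] :=
  ∫ p : ℝ × ℝ, qexp qi (-(p.1 * u)) * f p * qexp qj (-(p.2 * v))

lemma re_mul_comm (a b : ℍ[ℝ]) : (a*b).re = (b*a).re := by
  simp only [Quaternion.re_mul]; ring

lemma qi_re : qi.re = 0 := rfl
lemma qi_imI : qi.imI = 1 := rfl
lemma qi_imJ : qi.imJ = 0 := rfl
lemma qi_imK : qi.imK = 0 := rfl
lemma qj_re : qj.re = 0 := rfl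
lemma qj_imI : qj.imI = 0 := rfl
lemma qj_imJ : qj.imJ = 1 := rfl
lemma qj_imK : qj.imK = 0 := rfl
lemma star_qi : star qi = -qi := by ext <;> simp [qi_re, qi_imI, qi_imJ, qi_imK]
lemma star_qj : star qj = -qj := by ext <;> simp [qj_re, qj_imI, qj_imJ, qj_imK]

lemma star_qexp {v : ℍ[ℝ]} (hv : star v = -v) (θ : ℝ) :
    star (qexp v θ) = qexp v (-θ) := by
  simp [qexp, hv, Real.cos_neg, Real.sin_neg, smul_neg, neg_smul]

lemma norm_qexp_qi (θ : ℝ) : ‖qexp qi θ‖ = 1 := by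
  rw [norm_eq_sqrt_real_inner, Quaternion.inner_self]
  have : normSq (qexp qi θ) = 1 := by simp [Quaternion.normSq_def', qexp, qi_re, qi_imI, qi_imJ, qi_imK]
  rw [this]; simp

lemma norm_qexp_qj (θ : ℝ) : ‖qexp qj θ‖ = 1 := by
  rw [norm_eq_sqrt_real_inner, Quaternion.inner_self]
  have : normSq (qexp qj θ) = 1 := by simp [Quaternion.normSq_def', qexp, qj_re, qj_imI, qj_imJ, qj_imK]
  rw [this]; simp

lemma continuous_qexp (v : ℍ[ℝ]) : Continuous (qexp v) := by
  unfold qexp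
  exact (Quaternion.continuous_coe.comp Real.continuous_cos).add
    (Real.continuous_sin.smul continuous_const)

lemma inner_shift (a b : ℍ[ℝ]) (θ φ : ℝ) :
    (inner ℝ a (qexp qi θ * b * qexp qj φ) : ℝ)
      = inner ℝ (qexp qi (-θ) * a * qexp qj (-φ)) b := by
  rw [Quaternion.inner_def, Quaternion.inner_def, star_mul, star_mul,
    star_qexp star_qi, star_qexp star_qj]
  simp only [← mul_assoc]
  rw [re_mul_comm]
  simp only [← mul_assoc]

lemma integrable_conj {α : Type*} [MeasurableSpace α] [TopologicalSpace α]
    [OpensMeasurableSpace α] {μ : Measure α}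
    {g : α → ℍ[ℝ]} (hg : Integrable g μ) {a b : α → ℝ}
    (ha : Continuous a) (hb : Continuous b) :
    Integrable (fun w => qexp qi (a w) * g w * qexp qj (b w)) μ := by
  have hm : AEStronglyMeasurable (fun w => qexp qi (a w) * g w * qexp qj (b w)) μ :=
    ((((continuous_qexp qi).comp ha).aestronglyMeasurable.mul
      hg.aestronglyMeasurable).mul ((continuous_qexp qj).comp hb).aestronglyMeasurable)
  refine hg.norm.mono' hm ?_
  filter_upwards with w
  simp [norm_mul, norm_qexp_qi, norm_qexp_qj]

theorem QFT_Parseval (f : ℝ × ℝ → ℍ[ℝ])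
    (hf : Integrable f)
    (hFf : Integrable (fun p : ℝ × ℝ => QFT f p.1 p.2))
    (hinv : ∀ x y : ℝ, f (x, y) =
      ((2 * π) ^ 2)⁻¹ • ∫ w : ℝ × ℝ, qexp qi (w.1 * x) * QFT f w.1 w.2 * qexp qj (w.2 * y)) :
    Real.sqrt (∫ p : ℝ × ℝ, ‖f p‖ ^ 2) =
      (2 * π)⁻¹ * Real.sqrt (∫ w : ℝ × ℝ, ‖QFT f w.1 w.2‖ ^ 2) := by
  set c : ℝ := ((2 * π) ^ 2)⁻¹ with hc
  set F : ℝ × ℝ → ℍ[ℝ] := fun w => QFT f w.1 w.2 with hF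
  set B : ℝ × ℝ → ℝ × ℝ → ℍ[ℝ] :=
    fun p w => qexp qi (-(p.1 * w.1)) * f p * qexp qj (-(p.2 * w.2)) with hB
  -- integrability of inner function in w, for fixed p
  have hAint : ∀ p : ℝ × ℝ, Integrable
      (fun w : ℝ × ℝ => qexp qi (w.1 * p.1) * QFT f w.1 w.2 * qexp qj (w.2 * p.2)) := by
    intro p
    exact integrable_conj hFf
      (by fun_prop : Continuous fun w : ℝ × ℝ => w.1 * p.1)
      (by fun_prop : Continuous fun w : ℝ × ℝ => w.2 * p.2)
  have hBint : ∀ w : ℝ × ℝ, Integrable (fun p => B p w) := by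
    intro w
    exact integrable_conj hf
      (by fun_prop : Continuous fun p : ℝ × ℝ => -(p.1 * w.1))
      (by fun_prop : Continuous fun p : ℝ × ℝ => -(p.2 * w.2))
  -- Step A : pointwise identity
  have stepA : ∀ p : ℝ × ℝ, ‖f p‖ ^ 2 = c * ∫ w : ℝ × ℝ, (inner ℝ (B p w) (F w) : ℝ) := by
    intro p
    have h1 : ‖f p‖ ^ 2 = (inner ℝ (f p) (f p) : ℝ) := (real_inner_self_eq_norm_sq _).symm
    rw [h1]
    have hfp : f p = c • ∫ w : ℝ × ℝ,
        qexp qi (w.1 * p.1) * QFT f w.1 w.2 * qexp qj (w.2 * p.2) := by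
      conv_lhs => rw [show f p = f (p.1, p.2) by rw [Prod.mk.eta]]
      exact hinv p.1 p.2
    nth_rewrite 2 [hfp]
    rw [real_inner_smul_right]
    rw [← integral_inner (hAint p) (f p)]
    congr 1
    refine integral_congr_ae (Filter.Eventually.of_forall fun w => ?_)
    show (inner ℝ (f p) (qexp qi (w.1 * p.1) * QFT f w.1 w.2 * qexp qj (w.2 * p.2)) : ℝ)
        = inner ℝ (B p w) (F w)
    rw [inner_shift, mul_comm w.1 p.1, mul_comm w.2 p.2]
  -- joint integrability for Fubini
  have hjoint : Integrable (Function.uncurry fun p w : ℝ × ℝ => (inner ℝ (B p w) (F w) : ℝ))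
      ((volume : Measure (ℝ × ℝ)).prod volume) := by
    have hBm : AEStronglyMeasurable (fun z : (ℝ × ℝ) × (ℝ × ℝ) => B z.1 z.2)
        ((volume : Measure (ℝ × ℝ)).prod volume) := by
      have hfm : AEStronglyMeasurable (fun z : (ℝ × ℝ) × (ℝ × ℝ) => f z.1)
          ((volume : Measure (ℝ × ℝ)).prod volume) :=
        hf.aestronglyMeasurable.comp_quasiMeasurePreserving
          Measure.quasiMeasurePreserving_fst
      have c1 : Continuous (fun z : (ℝ × ℝ) × (ℝ × ℝ) => qexp qi (-(z.1.1 * z.2.1))) :=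
        (continuous_qexp qi).comp ((continuous_fst.fst.mul continuous_snd.fst).neg)
      have c2 : Continuous (fun z : (ℝ × ℝ) × (ℝ × ℝ) => qexp qj (-(z.1.2 * z.2.2))) :=
        (continuous_qexp qj).comp ((continuous_fst.snd.mul continuous_snd.snd).neg)
      exact (c1.aestronglyMeasurable.mul hfm).mul c2.aestronglyMeasurable
    have hFm : AEStronglyMeasurable (fun z : (ℝ × ℝ) × (ℝ × ℝ) => F z.2)
        ((volume : Measure (ℝ × ℝ)).prod volume) :=
      hFf.aestronglyMeasurable.comp_quasiMeasurePreserving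
        Measure.quasiMeasurePreserving_snd
    have hm : AEStronglyMeasurable
        (Function.uncurry fun p w : ℝ × ℝ => (inner ℝ (B p w) (F w) : ℝ))
        ((volume : Measure (ℝ × ℝ)).prod volume) := hBm.inner hFm
    have hg : Integrable (fun z : (ℝ × ℝ) × (ℝ × ℝ) => ‖f z.1‖ * ‖F z.2‖)
        ((volume : Measure (ℝ × ℝ)).prod volume) := hf.norm.mul_prod hFf.norm
    refine hg.mono' hm (Filter.Eventually.of_forall fun z => ?_)
    calc ‖(inner ℝ (B z.1 z.2) (F z.2) : ℝ)‖ ≤ ‖B z.1 z.2‖ * ‖F z.2‖ := norm_inner_le_norm _ _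
      _ = ‖f z.1‖ * ‖F z.2‖ := by
          simp [hB, norm_mul, norm_qexp_qi, norm_qexp_qj]
  -- Step D : inner integral over p
  have stepD : ∀ w : ℝ × ℝ, (∫ p : ℝ × ℝ, (inner ℝ (B p w) (F w) : ℝ)) = ‖F w‖ ^ 2 := by
    intro w
    have : (∫ p : ℝ × ℝ, (inner ℝ (B p w) (F w) : ℝ))
        = ∫ p : ℝ × ℝ, (inner ℝ (F w) (B p w) : ℝ) := by
      refine integral_congr_ae (Filter.Eventually.of_forall fun p => ?_)
      exact real_inner_comm _ _
    rw [this, integral_inner (hBint w) (F w)]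
    have h3 : (∫ p : ℝ × ℝ, B p w) = F w := rfl
    rw [h3, real_inner_self_eq_norm_sq]
  -- assemble
  have key : (∫ p : ℝ × ℝ, ‖f p‖ ^ 2) = c * ∫ w : ℝ × ℝ, ‖F w‖ ^ 2 := by
    calc (∫ p : ℝ × ℝ, ‖f p‖ ^ 2)
        = ∫ p : ℝ × ℝ, c * ∫ w : ℝ × ℝ, (inner ℝ (B p w) (F w) : ℝ) :=
          integral_congr_ae (Filter.Eventually.of_forall stepA)
      _ = c * ∫ p : ℝ × ℝ, ∫ w : ℝ × ℝ, (inner ℝ (B p w) (F w) : ℝ) := integral_const_mul _ _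
      _ = c * ∫ w : ℝ × ℝ, ∫ p : ℝ × ℝ, (inner ℝ (B p w) (F w) : ℝ) := by
          rw [integral_integral_swap hjoint]
      _ = c * ∫ w : ℝ × ℝ, ‖F w‖ ^ 2 := by
          rw [integral_congr_ae (Filter.Eventually.of_forall stepD)]
  rw [key, hc, Real.sqrt_mul (by positivity), Real.sqrt_inv,
    Real.sqrt_sq (by positivity : (0:ℝ) ≤ 2 * π)]
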